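/- Let n ≥ 2, let λ, ν ∈ ℂ with ν − λ a nonnegative integer, and let 1 ≤ p ≤ n−1. Then (x_p x_n)·𝒦_{λ−1,ν+1} = 4 γ(λ − (n−1)/2, ν−λ)·∂_p 𝒦_{λ+1,ν} as tempered distributions on ℝ^n. -/

import Mathlib

/-- Partial derivative ∂_p of a complex-valued function on ℝ^n. -/
noncomputable def pd {n : ℕ} (p : Fin n) (f : (Fin n → ℝ) → ℂ) : (Fin n → ℝ) → ℂ :=
  fun x => fderiv ℝ f x (Pi.single p 1)

/-- Δ' = ∂_1² + ⋯ + ∂_{n−1}², the Laplacian in the first n−1 variables on ℝ^n. -/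
noncomputable def lapP {n : ℕ} (f : (Fin n → ℝ) → ℂ) : (Fin n → ℝ) → ℂ :=
  fun x => ∑ j ∈ Finset.univ.filter (fun j : Fin n => (j : ℕ) < n - 1), pd j (pd j f) x

/-- ∂_n, the partial derivative in the last variable on ℝ^n. -/
noncomputable def pdLast {n : ℕ} (f : (Fin n → ℝ) → ℂ) : (Fin n → ℝ) → ℂ :=
  if h : 0 < n then pd ⟨n - 1, by omega⟩ f else 0

/-- The coefficient of z^{l−2k} in the renormalized Gegenbauer polynomial
C̃_l^α(z) = Σ_{k=0}^{⌊l/2⌋} (−1)^k (∏_{m=⌊(l+1)/2⌋}^{l−k−1}(α+m)) (2z)^{l−2k}/(k!(l−2k)!). -/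
noncomputable def gegenCoeff (α : ℂ) (l k : ℕ) : ℂ :=
  (-1 : ℂ) ^ k * (∏ m ∈ Finset.Ico ((l + 1) / 2) (l - k), (α + (m : ℂ))) *
    2 ^ (l - 2 * k) / ((Nat.factorial k : ℂ) * (Nat.factorial (l - 2 * k) : ℂ))

/-- The action on a test function `φ` of the tempered distribution
`𝒦_{λ,ν} = Σ_{k=0}^{⌊l/2⌋} a_k (−1)^k (Δ')^k ∂_n^{l−2k} δ` on ℝ^n, where `l = ν − λ`
and `a_k` are the coefficients of `C̃_l^{λ−(n−1)/2}`; each `∂` contributes a sign `−1`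
and δ evaluates at 0.  By convention `𝒦_{λ,ν} = 0` when `l < 0`. -/
noncomputable def Kact (n : ℕ) (lam : ℂ) (l : ℤ) (φ : (Fin n → ℝ) → ℂ) : ℂ :=
  if 0 ≤ l then
    ∑ k ∈ Finset.range (l.toNat / 2 + 1),
      gegenCoeff (lam - ((n : ℂ) - 1) / 2) l.toNat k *
        ((-1 : ℂ) ^ k * ((-1 : ℂ) ^ (l.toNat - 2 * k) *
          (pdLast (n := n))^[l.toNat - 2 * k] ((lapP (n := n))^[k] φ) 0))
  else 0

/-- γ(μ, a) := 1 if a is odd, μ + a/2 if a is even. -/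
noncomputable def gam (mu : ℂ) (a : ℕ) : ℂ := if a % 2 = 1 then 1 else mu + ((a / 2 : ℕ) : ℂ)

namespace St12

variable {n : ℕ}

noncomputable def croL (i : Fin n) : (Fin n → ℝ) →L[ℝ] ℂ :=
  Complex.ofRealCLM.comp (ContinuousLinearMap.proj i)

abbrev Sm (f : (Fin n → ℝ) → ℂ) : Prop := ContDiff ℝ (⊤ : ℕ∞) f

lemma diffb {f : (Fin n → ℝ) → ℂ} (hf : Sm f) : Differentiable ℝ f :=
  hf.differentiable (by simp)

lemma sm_cro_mul {f : (Fin n → ℝ) → ℂ} (hf : Sm f) (i : Fin n) :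
    Sm (fun x => ((x i : ℝ) : ℂ) * f x) := (croL i).contDiff.mul hf

lemma pd_smooth {f : (Fin n → ℝ) → ℂ} (hf : Sm f) (j : Fin n) : Sm (pd j f) := by
  have h := hf.fderiv_right (m := (⊤ : ℕ∞)) (by exact_mod_cast le_top)
  exact (ContinuousLinearMap.apply ℝ ℂ (Pi.single j 1)).contDiff.comp h

lemma pd_add {f g : (Fin n → ℝ) → ℂ} (hf : Sm f) (hg : Sm g) (j : Fin n) :
    pd j (fun x => f x + g x) = fun x => pd j f x + pd j g x := by
  funext x
  unfold pd
  rw [fderiv_fun_add (diffb hf x) (diffb hg x)]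
  rfl

lemma pd_const_mul {f : (Fin n → ℝ) → ℂ} (hf : Sm f) (c : ℂ) (j : Fin n) :
    pd j (fun x => c * f x) = fun x => c * pd j f x := by
  funext x
  unfold pd
  rw [fderiv_const_mul (diffb hf x) c]
  rfl

lemma pd_cro_mul {f : (Fin n → ℝ) → ℂ} (hf : Sm f) (i j : Fin n) :
    pd j (fun x => ((x i : ℝ) : ℂ) * f x)
      = fun x => ((x i : ℝ) : ℂ) * pd j f x + (if i = j then f x else 0) := by
  funext x
  unfold pd
  have h1 : DifferentiableAt ℝ (fun x : Fin n → ℝ => ((x i : ℝ) : ℂ)) x :=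
    (croL i).differentiableAt
  rw [fderiv_fun_mul h1 (diffb hf x)]
  have h2 : fderiv ℝ (fun x : Fin n → ℝ => ((x i : ℝ) : ℂ)) x = croL i :=
    (croL i).fderiv
  rw [h2]
  have h3 : (croL i) (Pi.single j 1) = if i = j then (1:ℂ) else 0 := by
    simp only [croL, ContinuousLinearMap.comp_apply, ContinuousLinearMap.proj_apply,
      Pi.single_apply]
    split <;> simp
  simp only [ContinuousLinearMap.add_apply, ContinuousLinearMap.smul_apply, smul_eq_mul, h3]
  by_cases h : i = j <;> simp [h] <;> ring

lemma pd_comm {f : (Fin n → ℝ) → ℂ} (hf : Sm f) (i j : Fin n) :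
    pd i (pd j f) = pd j (pd i f) := by
  funext x
  have hd : ∀ y, HasFDerivAt f (fderiv ℝ f y) y :=
    fun y => (diffb hf y).hasFDerivAt
  have hfd : Differentiable ℝ (fderiv ℝ f) :=
    (hf.fderiv_right (m := (⊤ : ℕ∞)) (by exact_mod_cast le_top)).differentiable
      (by simp)
  have h2 : HasFDerivAt (fderiv ℝ f) (fderiv ℝ (fderiv ℝ f) x) x :=
    (hfd x).hasFDerivAt
  have key := second_derivative_symmetric hd h2 (Pi.single i 1) (Pi.single j 1)
  have hc : ∀ v w : Fin n → ℝ, fderiv ℝ (fun y => fderiv ℝ f y v) x w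
      = fderiv ℝ (fderiv ℝ f) x w v := by
    intro v w
    rw [fderiv_clm_apply (hfd x) (differentiableAt_const v)]
    simp
  show fderiv ℝ (fun y => fderiv ℝ f y (Pi.single j 1)) x (Pi.single i 1) = _
  rw [hc, key, ← hc]
  rfl

lemma pd_finsum {ι : Type*} (s : Finset ι) (F : ι → (Fin n → ℝ) → ℂ)
    (hF : ∀ i ∈ s, Sm (F i)) (j : Fin n) :
    pd j (fun x => ∑ i ∈ s, F i x) = fun x => ∑ i ∈ s, pd j (F i) x := by
  funext x
  unfold pd
  rw [fderiv_fun_sum (fun i hi => diffb (hF i hi) x)]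
  simp


lemma lapP_smooth {f : (Fin n → ℝ) → ℂ} (hf : Sm f) : Sm (lapP f) := by
  unfold lapP
  exact ContDiff.sum fun j _ => pd_smooth (pd_smooth hf j) j

lemma lapP_add {f g : (Fin n → ℝ) → ℂ} (hf : Sm f) (hg : Sm g) :
    lapP (fun x => f x + g x) = fun x => lapP f x + lapP g x := by
  funext x
  unfold lapP
  rw [← Finset.sum_add_distrib]
  refine Finset.sum_congr rfl fun j _ => ?_
  rw [pd_add hf hg j, pd_add (pd_smooth hf j) (pd_smooth hg j) j]

lemma lapP_const_mul {f : (Fin n → ℝ) → ℂ} (hf : Sm f) (c : ℂ) :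
    lapP (fun x => c * f x) = fun x => c * lapP f x := by
  funext x
  unfold lapP
  rw [Finset.mul_sum]
  refine Finset.sum_congr rfl fun j _ => ?_
  rw [pd_const_mul hf c j, pd_const_mul (pd_smooth hf j) c j]

lemma pd_lapP_comm {f : (Fin n → ℝ) → ℂ} (hf : Sm f) (i : Fin n) :
    pd i (lapP f) = lapP (pd i f) := by
  have h0 : lapP f = fun x => ∑ j ∈ Finset.univ.filter (fun j : Fin n => (j : ℕ) < n - 1),
      pd j (pd j f) x := rfl
  rw [h0, pd_finsum _ _ (fun j _ => pd_smooth (pd_smooth hf j) j) i]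
  funext x
  show _ = ∑ j ∈ Finset.univ.filter (fun j : Fin n => (j : ℕ) < n - 1), pd j (pd j (pd i f)) x
  refine Finset.sum_congr rfl fun j _ => ?_
  rw [pd_comm (pd_smooth hf j) i j, pd_comm hf i j]

lemma lapP_cro_mul_last {f : (Fin n → ℝ) → ℂ} (hf : Sm f) {q : Fin n} (hq : ¬ ((q:ℕ) < n - 1)) :
    lapP (fun x => ((x q : ℝ) : ℂ) * f x) = fun x => ((x q : ℝ) : ℂ) * lapP f x := by
  funext x
  unfold lapP
  rw [Finset.mul_sum]
  refine Finset.sum_congr rfl fun j hj => ?_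
  have hne : q ≠ j := by
    rintro rfl
    exact hq (Finset.mem_filter.mp hj).2
  have e1 : pd j (fun x => ((x q : ℝ) : ℂ) * f x) = fun x => ((x q : ℝ) : ℂ) * pd j f x := by
    rw [pd_cro_mul hf q j]
    simp [hne]
  rw [e1, pd_cro_mul (pd_smooth hf j) q j]
  simp [hne]

lemma lapP_cro_mul_p {f : (Fin n → ℝ) → ℂ} (hf : Sm f) {p : Fin n} (hp : (p:ℕ) < n - 1) :
    lapP (fun x => ((x p : ℝ) : ℂ) * f x)
      = fun x => ((x p : ℝ) : ℂ) * lapP f x + 2 * pd p f x := by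
  funext x
  unfold lapP
  have key : ∀ j ∈ Finset.univ.filter (fun j : Fin n => (j : ℕ) < n - 1),
      pd j (pd j (fun x => ((x p : ℝ) : ℂ) * f x)) x
      = ((x p : ℝ) : ℂ) * pd j (pd j f) x + (if p = j then 2 * pd p f x else 0) := by
    intro j hj
    rw [pd_cro_mul hf p j]
    by_cases h : p = j
    · subst h
      have e1 : (fun x => ((x p : ℝ) : ℂ) * pd p f x + (if p = p then f x else 0))
          = fun x => (fun x => ((x p : ℝ) : ℂ) * pd p f x) x + f x := by simp
      rw [e1, pd_add (sm_cro_mul (pd_smooth hf p) p) hf p,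
        pd_cro_mul (pd_smooth hf p) p p]
      simp
      ring
    · have e1 : (fun x => ((x p : ℝ) : ℂ) * pd j f x + (if p = j then f x else 0))
          = fun x => ((x p : ℝ) : ℂ) * pd j f x := by simp [h]
      rw [e1, pd_cro_mul (pd_smooth hf j) p j]
      simp [h]
  rw [Finset.sum_congr rfl key, Finset.sum_add_distrib, Finset.sum_ite_eq]
  have hmem : p ∈ Finset.univ.filter (fun j : Fin n => (j : ℕ) < n - 1) :=
    Finset.mem_filter.mpr ⟨Finset.mem_univ p, hp⟩
  rw [if_pos hmem, Finset.mul_sum]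

lemma pd_iter_smooth (q : Fin n) (m : ℕ) {f : (Fin n → ℝ) → ℂ} (hf : Sm f) :
    Sm ((pd q)^[m] f) := by
  induction m generalizing f with
  | zero => exact hf
  | succ m ih => rw [Function.iterate_succ_apply]; exact ih (pd_smooth hf q)

lemma lapP_iter_smooth (k : ℕ) {f : (Fin n → ℝ) → ℂ} (hf : Sm f) :
    Sm ((lapP (n := n))^[k] f) := by
  induction k generalizing f with
  | zero => exact hf
  | succ k ih => rw [Function.iterate_succ_apply]; exact ih (lapP_smooth hf)

lemma pd_iter_add (q : Fin n) (m : ℕ) {f g : (Fin n → ℝ) → ℂ} (hf : Sm f) (hg : Sm g) :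
    (pd q)^[m] (fun x => f x + g x) = fun x => (pd q)^[m] f x + (pd q)^[m] g x := by
  induction m generalizing f g with
  | zero => rfl
  | succ m ih =>
    rw [Function.iterate_succ_apply, pd_add hf hg q,
      ih (pd_smooth hf q) (pd_smooth hg q), Function.iterate_succ_apply,
      Function.iterate_succ_apply]

lemma pd_iter_const_mul (q : Fin n) (m : ℕ) {f : (Fin n → ℝ) → ℂ} (hf : Sm f) (c : ℂ) :
    (pd q)^[m] (fun x => c * f x) = fun x => c * (pd q)^[m] f x := by
  induction m generalizing f with
  | zero => rfl
  | succ m ih =>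
    rw [Function.iterate_succ_apply, pd_const_mul hf c q, ih (pd_smooth hf q),
      Function.iterate_succ_apply]

lemma lapP_iter_add (k : ℕ) {f g : (Fin n → ℝ) → ℂ} (hf : Sm f) (hg : Sm g) :
    (lapP (n := n))^[k] (fun x => f x + g x)
      = fun x => (lapP (n := n))^[k] f x + (lapP (n := n))^[k] g x := by
  induction k generalizing f g with
  | zero => rfl
  | succ k ih =>
    rw [Function.iterate_succ_apply, lapP_add hf hg,
      ih (lapP_smooth hf) (lapP_smooth hg), Function.iterate_succ_apply,
      Function.iterate_succ_apply]

lemma lapP_iter_const_mul (k : ℕ) {f : (Fin n → ℝ) → ℂ} (hf : Sm f) (c : ℂ) :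
    (lapP (n := n))^[k] (fun x => c * f x) = fun x => c * (lapP (n := n))^[k] f x := by
  induction k generalizing f with
  | zero => rfl
  | succ k ih =>
    rw [Function.iterate_succ_apply, lapP_const_mul hf c, ih (lapP_smooth hf),
      Function.iterate_succ_apply]

lemma pd_iter_cro_ne {q i : Fin n} (hne : i ≠ q) (m : ℕ) {f : (Fin n → ℝ) → ℂ} (hf : Sm f) :
    (pd q)^[m] (fun x => ((x i : ℝ) : ℂ) * f x)
      = fun x => ((x i : ℝ) : ℂ) * (pd q)^[m] f x := by
  induction m generalizing f with
  | zero => rfl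
  | succ m ih =>
    rw [Function.iterate_succ_apply]
    have e1 : pd q (fun x => ((x i : ℝ) : ℂ) * f x)
        = fun x => ((x i : ℝ) : ℂ) * pd q f x := by
      rw [pd_cro_mul hf i q]; simp [hne]
    rw [e1, ih (pd_smooth hf q), Function.iterate_succ_apply]

lemma pd_iter_cro_eq (q : Fin n) (m : ℕ) {f : (Fin n → ℝ) → ℂ} (hf : Sm f) :
    (pd q)^[m + 1] (fun x => ((x q : ℝ) : ℂ) * f x)
      = fun x => ((x q : ℝ) : ℂ) * (pd q)^[m + 1] f x + ((m + 1 : ℕ) : ℂ) * (pd q)^[m] f x := by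
  induction m generalizing f with
  | zero =>
    rw [Function.iterate_one, pd_cro_mul hf q q]
    funext x
    simp
  | succ m ih =>
    rw [Function.iterate_succ_apply, pd_cro_mul hf q q]
    have e1 : (fun x => ((x q : ℝ) : ℂ) * pd q f x + (if q = q then f x else 0))
        = fun x => (fun y => ((y q : ℝ) : ℂ) * pd q f y) x + f x := by simp
    rw [e1, pd_iter_add q (m+1) (sm_cro_mul (pd_smooth hf q) q) hf, ih (pd_smooth hf q)]
    funext x
    rw [← Function.iterate_succ_apply (pd q) (m+1) f, ← Function.iterate_succ_apply (pd q) m f]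
    push_cast
    ring

lemma lapP_iter_cro_last {q : Fin n} (hq : ¬ ((q : ℕ) < n - 1)) (k : ℕ)
    {f : (Fin n → ℝ) → ℂ} (hf : Sm f) :
    (lapP (n := n))^[k] (fun x => ((x q : ℝ) : ℂ) * f x)
      = fun x => ((x q : ℝ) : ℂ) * (lapP (n := n))^[k] f x := by
  induction k generalizing f with
  | zero => rfl
  | succ k ih =>
    rw [Function.iterate_succ_apply, lapP_cro_mul_last hf hq, ih (lapP_smooth hf),
      Function.iterate_succ_apply]

lemma lapP_iter_cro_p {p : Fin n} (hp : (p : ℕ) < n - 1) (k : ℕ)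
    {f : (Fin n → ℝ) → ℂ} (hf : Sm f) :
    (lapP (n := n))^[k + 1] (fun x => ((x p : ℝ) : ℂ) * f x)
      = fun x => ((x p : ℝ) : ℂ) * (lapP (n := n))^[k + 1] f x
          + ((2 * (k + 1) : ℕ) : ℂ) * (lapP (n := n))^[k] (pd p f) x := by
  induction k generalizing f with
  | zero =>
    rw [Function.iterate_one, lapP_cro_mul_p hf hp]
    funext x
    norm_num
  | succ k ih =>
    rw [Function.iterate_succ_apply, lapP_cro_mul_p hf hp]
    have e1 : (fun x => ((x p : ℝ) : ℂ) * lapP f x + 2 * pd p f x)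
        = fun x => (fun y => ((y p : ℝ) : ℂ) * lapP f y) x + (fun y => 2 * pd p f y) x := rfl
    rw [e1, lapP_iter_add (k+1) (sm_cro_mul (lapP_smooth hf) p)
        (contDiff_const.mul (pd_smooth hf p)), ih (lapP_smooth hf),
      lapP_iter_const_mul (k+1) (pd_smooth hf p) 2, pd_lapP_comm hf p]
    funext x
    rw [← Function.iterate_succ_apply (lapP (n := n)) (k+1) f,
      ← Function.iterate_succ_apply (lapP (n := n)) k (pd p f)]
    push_cast
    ring

section Eval

variable {n : ℕ} {p q : Fin n} {φ : (Fin n → ℝ) → ℂ}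

lemma sm_w (hφ : Sm φ) : Sm (fun x => ((x p : ℝ) : ℂ) * (((x q : ℝ) : ℂ) * φ x)) :=
  sm_cro_mul (sm_cro_mul hφ q) p

lemma pd_p_w' (hφ : Sm φ) (hpq : p ≠ q) :
    pd p (fun x => ((x q : ℝ) : ℂ) * φ x) = fun x => ((x q : ℝ) : ℂ) * pd p φ x := by
  rw [pd_cro_mul hφ q p]
  simp [hpq.symm]

lemma T_pos (hp : (p : ℕ) < n - 1) (hq : (q : ℕ) = n - 1) (hφ : Sm φ) (k m : ℕ) :
    (pd q)^[m + 1] ((lapP (n := n))^[k + 1]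
        (fun x => ((x p : ℝ) : ℂ) * (((x q : ℝ) : ℂ) * φ x))) 0
      = ((2 * (k + 1) * (m + 1) : ℕ) : ℂ)
          * (pd q)^[m] ((lapP (n := n))^[k] (pd p φ)) 0 := by
  have hq' : ¬ ((q : ℕ) < n - 1) := by omega
  have hpq : p ≠ q := by rintro rfl; omega
  have hw' : Sm (fun x => ((x q : ℝ) : ℂ) * φ x) := sm_cro_mul hφ q
  have hv : Sm ((lapP (n := n))^[k] (pd p φ)) := lapP_iter_smooth k (pd_smooth hφ p)
  have step3 : (lapP (n := n))^[k] (pd p (fun x => ((x q : ℝ) : ℂ) * φ x))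
      = fun x => ((x q : ℝ) : ℂ) * (lapP (n := n))^[k] (pd p φ) x := by
    rw [pd_p_w' hφ hpq]
    exact lapP_iter_cro_last hq' k (pd_smooth hφ p)
  rw [lapP_iter_cro_p hp k hw']
  rw [pd_iter_add q (m+1) (sm_cro_mul (lapP_iter_smooth (k+1) hw') p)
    (contDiff_const.mul (lapP_iter_smooth k (pd_smooth (sm_cro_mul hφ q) p)))]
  rw [pd_iter_cro_ne hpq (m+1) (lapP_iter_smooth (k+1) hw')]
  rw [pd_iter_const_mul q (m+1) (lapP_iter_smooth k (pd_smooth (sm_cro_mul hφ q) p))]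
  rw [step3]
  rw [pd_iter_cro_eq q m hv]
  simp only [Pi.zero_apply, Complex.ofReal_zero, zero_mul, zero_add, mul_zero]
  push_cast
  ring

lemma T_k0 (hp : (p : ℕ) < n - 1) (hq : (q : ℕ) = n - 1) (hφ : Sm φ) (m : ℕ) :
    (pd q)^[m] (fun x => ((x p : ℝ) : ℂ) * (((x q : ℝ) : ℂ) * φ x)) 0 = 0 := by
  have hpq : p ≠ q := by rintro rfl; omega
  rw [pd_iter_cro_ne hpq m (sm_cro_mul hφ q)]
  simp

lemma T_m0 (hp : (p : ℕ) < n - 1) (hq : (q : ℕ) = n - 1) (hφ : Sm φ) (k : ℕ) :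
    (lapP (n := n))^[k] (fun x => ((x p : ℝ) : ℂ) * (((x q : ℝ) : ℂ) * φ x)) 0 = 0 := by
  have hq' : ¬ ((q : ℕ) < n - 1) := by omega
  have hpq : p ≠ q := by rintro rfl; omega
  have hw' : Sm (fun x => ((x q : ℝ) : ℂ) * φ x) := sm_cro_mul hφ q
  cases k with
  | zero => simp
  | succ k =>
    rw [lapP_iter_cro_p hp k hw']
    have step3 : (lapP (n := n))^[k] (pd p (fun x => ((x q : ℝ) : ℂ) * φ x))
        = fun x => ((x q : ℝ) : ℂ) * (lapP (n := n))^[k] (pd p φ) x := by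
      rw [pd_p_w' hφ hpq]
      exact lapP_iter_cro_last hq' k (pd_smooth hφ p)
    rw [step3]
    simp

end Eval

lemma gegen_eq (α : ℂ) (l k a b c : ℕ) (h1 : (l + 1) / 2 = a) (h2 : l - k = b)
    (h3 : l - 2 * k = c) :
    gegenCoeff α l k = (-1 : ℂ) ^ k * (∏ m ∈ Finset.Ico a b, (α + (m : ℂ))) * 2 ^ c
      / ((Nat.factorial k : ℂ) * (Nat.factorial c : ℂ)) := by
  subst h1; subst h2; subst h3; rfl

lemma fact_succ_cast (m : ℕ) : ((Nat.factorial (m + 1) : ℕ) : ℂ)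
    = ((m : ℂ) + 1) * (Nat.factorial m : ℂ) := by
  rw [Nat.factorial_succ]; push_cast; ring

lemma term_id (α S : ℂ) (L k : ℕ) (hk : 2 * k + 1 ≤ L) :
    gegenCoeff (α - 1) (L + 2) (k + 1) *
      ((-1 : ℂ) ^ (k + 1) * ((-1 : ℂ) ^ (L - 1 - 2 * k + 1) *
        (((2 * (k + 1) * (L - 1 - 2 * k + 1) : ℕ) : ℂ) * S)))
      = -(4 * gam α L) *
          (gegenCoeff (α + 1) (L - 1) k * ((-1 : ℂ) ^ k * ((-1 : ℂ) ^ (L - 1 - 2 * k) * S))) := by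
  rcases Nat.even_or_odd L with hE | hO
  · obtain ⟨r, rfl⟩ := hE
    obtain ⟨d, rfl⟩ : ∃ d, r = k + 1 + d := ⟨r - (k + 1), by omega⟩
    rw [gegen_eq (α - 1) _ (k + 1) (k + d + 2) (k + 2 * d + 3) (2 * d + 2)
        (by omega) (by omega) (by omega),
      gegen_eq (α + 1) _ k (k + d + 1) (k + 2 * d + 1) (2 * d + 1)
        (by omega) (by omega) (by omega)]
    have hgam : gam α (k + 1 + d + (k + 1 + d)) = α + ((k + d + 1 : ℕ) : ℂ) := by
      unfold gam
      rw [if_neg (by omega), show (k + 1 + d + (k + 1 + d)) / 2 = k + d + 1 by omega]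
    rw [hgam, show k + 1 + d + (k + 1 + d) - 1 - 2 * k = 2 * d + 1 by omega]
    rw [Finset.prod_Ico_eq_prod_range, Finset.prod_Ico_eq_prod_range]
    rw [show k + 2 * d + 3 - (k + d + 2) = d + 1 by omega,
      show k + 2 * d + 1 - (k + d + 1) = d by omega]
    have hP : (∏ i ∈ Finset.range (d + 1), (α - 1 + ((k + d + 2 + i : ℕ) : ℂ)))
        = (α + ((k + d + 1 : ℕ) : ℂ)) * ∏ i ∈ Finset.range d, (α + 1 + ((k + d + 1 + i : ℕ) : ℂ)) := by
      rw [Finset.prod_range_succ', mul_comm]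
      congr 1
      · push_cast; ring
      · exact Finset.prod_congr rfl fun i _ => by push_cast; ring
    rw [hP]
    rw [show (k:ℕ) + 1 = k + 1 from rfl, fact_succ_cast k,
      show 2 * d + 2 = (2 * d + 1) + 1 by omega, fact_succ_cast (2 * d + 1)]
    have hp1 : (-1 : ℂ) ^ (2 * d + 1 + 1) = 1 := by
      rw [show 2 * d + 1 + 1 = 2 * (d + 1) by ring, pow_mul]; norm_num
    have hp2 : (-1 : ℂ) ^ (2 * d + 1) = -1 := by
      rw [pow_succ, pow_mul]; norm_num
    rw [hp1, hp2]
    have nz1 : ((Nat.factorial k : ℕ) : ℂ) ≠ 0 := Nat.cast_ne_zero.mpr k.factorial_ne_zero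
    have nz2 : ((Nat.factorial (2 * d + 1) : ℕ) : ℂ) ≠ 0 :=
      Nat.cast_ne_zero.mpr (2 * d + 1).factorial_ne_zero
    have nzk : ((k : ℂ) + 1) ≠ 0 := by
      have h := Nat.cast_ne_zero (R := ℂ).mpr (Nat.succ_ne_zero k)
      push_cast at h; exact h
    have nzd : ((2 * d + 1 : ℂ) + 1) ≠ 0 := by
      have : ((2 * d + 1 : ℕ) : ℂ) + 1 ≠ 0 := Nat.cast_add_one_ne_zero (2 * d + 1)
      push_cast at this ⊢; convert this using 2 <;> push_cast <;> ring
    have nzA : (1 + (d:ℂ)) ≠ 0 := by norm_cast; omega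
    have nzB : (1 + (d:ℂ) * 2) ≠ 0 := by norm_cast; omega
    push_cast
    rw [pow_succ]
    field_simp
    ring_nf
    field_simp
    ring
  · obtain ⟨t, rfl⟩ := hO
    obtain ⟨d, rfl⟩ : ∃ d, t = k + d := ⟨t - k, by omega⟩
    rw [gegen_eq (α - 1) _ (k + 1) (k + d + 2) (k + 2 * d + 2) (2 * d + 1)
        (by omega) (by omega) (by omega),
      gegen_eq (α + 1) _ k (k + d) (k + 2 * d) (2 * d)
        (by omega) (by omega) (by omega)]
    have hgam : gam α (2 * (k + d) + 1) = 1 := by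
      unfold gam; rw [if_pos (by omega)]
    rw [hgam, show 2 * (k + d) + 1 - 1 - 2 * k = 2 * d by omega]
    rw [Finset.prod_Ico_eq_prod_range, Finset.prod_Ico_eq_prod_range]
    rw [show k + 2 * d + 2 - (k + d + 2) = d by omega,
      show k + 2 * d - (k + d) = d by omega]
    have hP : (∏ i ∈ Finset.range d, (α - 1 + ((k + d + 2 + i : ℕ) : ℂ)))
        = ∏ i ∈ Finset.range d, (α + 1 + ((k + d + i : ℕ) : ℂ)) :=
      Finset.prod_congr rfl fun i _ => by push_cast; ring
    rw [hP]
    rw [fact_succ_cast k, show 2 * d + 1 = (2 * d) + 1 by omega, fact_succ_cast (2 * d)]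
    have hp1 : (-1 : ℂ) ^ (2 * d + 1) = -1 := by rw [pow_succ, pow_mul]; norm_num
    have hp2 : (-1 : ℂ) ^ (2 * d) = 1 := by rw [pow_mul]; norm_num
    rw [hp1, hp2]
    have nz1 : ((Nat.factorial k : ℕ) : ℂ) ≠ 0 := Nat.cast_ne_zero.mpr k.factorial_ne_zero
    have nz2 : ((Nat.factorial (2 * d) : ℕ) : ℂ) ≠ 0 :=
      Nat.cast_ne_zero.mpr (2 * d).factorial_ne_zero
    have nzk : ((k : ℂ) + 1) ≠ 0 := by
      have h := Nat.cast_ne_zero (R := ℂ).mpr (Nat.succ_ne_zero k)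
      push_cast at h; exact h
    have nzd : ((2 * d : ℂ) + 1) ≠ 0 := by
      have : ((2 * d : ℕ) : ℂ) + 1 ≠ 0 := Nat.cast_add_one_ne_zero (2 * d)
      push_cast at this ⊢; convert this using 2 <;> push_cast <;> ring
    have nzA : (1 + (d:ℂ)) ≠ 0 := by norm_cast; omega
    have nzB : (1 + (d:ℂ) * 2) ≠ 0 := by norm_cast; omega
    push_cast
    rw [pow_succ]
    field_simp
    ring_nf
    field_simp
    ring

lemma sum_assembly (F G : ℕ → ℂ) (c : ℂ) (N N' : ℕ) (hN' : N' ≤ N)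
    (h0 : F 0 = 0)
    (hmid : ∀ j, j < N' → F (j + 1) = c * G j)
    (hhigh : ∀ j, N' ≤ j → j < N → F (j + 1) = 0) :
    ∑ k ∈ Finset.range (N + 1), F k = c * ∑ j ∈ Finset.range N', G j := by
  rw [Finset.sum_range_succ' F N, h0, add_zero]
  rw [← Finset.sum_range_add_sum_Ico (fun j => F (j + 1)) hN']
  rw [Finset.sum_congr rfl (fun j hj => hmid j (Finset.mem_range.mp hj)),
    Finset.sum_eq_zero (fun j hj => hhigh j (Finset.mem_Ico.mp hj).1 (Finset.mem_Ico.mp hj).2),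
    add_zero, Finset.mul_sum]

end St12

namespace St12

lemma case_zero (n : ℕ) (hn : 2 ≤ n) (lam : ℂ) (p : Fin n) (hp : (p : ℕ) < n - 1)
    (φ : SchwartzMap (Fin n → ℝ) ℂ) :
    Kact n (lam - 1) ((0:ℤ) + 2) (fun x => ((x p * x ⟨n - 1, Nat.sub_one_lt (by omega)⟩ : ℝ) : ℂ) * φ x)
      = 4 * gam (lam - ((n : ℂ) - 1) / 2) (0:ℤ).toNat *
          (-(Kact n (lam + 1) ((0:ℤ) - 1) (pd p ⇑φ))) := by
  have hφ : St12.Sm (⇑φ) := φ.smooth (⊤ : ℕ∞)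
  have hq : (((⟨n - 1, Nat.sub_one_lt (by omega)⟩ : Fin n)) : ℕ) = n - 1 := rfl
  have hpdl : (pdLast (n := n)) = pd (⟨n - 1, Nat.sub_one_lt (by omega)⟩ : Fin n) := by
    funext f
    show (if h : 0 < n then pd ⟨n - 1, Nat.sub_one_lt (by omega)⟩ f else 0) = _
    rw [dif_pos (by omega : 0 < n)]
  have hW : (fun x : Fin n → ℝ => ((x p * x ⟨n - 1, Nat.sub_one_lt (by omega)⟩ : ℝ) : ℂ) * φ x)
      = fun x => ((x p : ℝ) : ℂ) * (((x (⟨n - 1, Nat.sub_one_lt (by omega)⟩ : Fin n) : ℝ) : ℂ) * φ x) := by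
    funext x
    push_cast
    ring
  have hc1 : lam - 1 - ((n : ℂ) - 1) / 2 = (lam - ((n : ℂ) - 1) / 2) - 1 := by ring
  have hc2 : lam + 1 - ((n : ℂ) - 1) / 2 = (lam - ((n : ℂ) - 1) / 2) + 1 := by ring
  unfold Kact
  rw [if_pos (by norm_num : (0:ℤ) ≤ 0 + 2), if_neg (by norm_num : ¬ (0:ℤ) ≤ 0 - 1)]
  rw [hpdl, hW]
  rw [show ((0:ℤ) + 2).toNat = 2 from rfl, show (2/2 + 1 : ℕ) = 2 from rfl]
  rw [Finset.sum_range_succ, Finset.sum_range_succ, Finset.sum_range_zero]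
  have e0 : (2 - 2 * 0 : ℕ) = 2 := rfl
  have e1 : (2 - 2 * 1 : ℕ) = 0 := rfl
  rw [e0, e1]
  simp only [Function.iterate_zero, id_eq]
  rw [St12.T_k0 hp hq hφ, St12.T_m0 hp hq hφ]
  simp

lemma case_pos (n : ℕ) (hn : 2 ≤ n) (lam : ℂ) (l : ℤ) (hl : 0 ≤ l) (h1 : l ≠ 0) (p : Fin n)
    (hp : (p : ℕ) < n - 1) (φ : SchwartzMap (Fin n → ℝ) ℂ) :
    Kact n (lam - 1) (l + 2) (fun x => ((x p * x ⟨n - 1, Nat.sub_one_lt (by omega)⟩ : ℝ) : ℂ) * φ x)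
      = 4 * gam (lam - ((n : ℂ) - 1) / 2) l.toNat *
          (-(Kact n (lam + 1) (l - 1) (pd p ⇑φ))) := by
  have hφ : St12.Sm (⇑φ) := φ.smooth (⊤ : ℕ∞)
  have hq : (((⟨n - 1, Nat.sub_one_lt (by omega)⟩ : Fin n)) : ℕ) = n - 1 := rfl
  have hpdl : (pdLast (n := n)) = pd (⟨n - 1, Nat.sub_one_lt (by omega)⟩ : Fin n) := by
    funext f
    show (if h : 0 < n then pd ⟨n - 1, Nat.sub_one_lt (by omega)⟩ f else 0) = _
    rw [dif_pos (by omega : 0 < n)]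
  have hW : (fun x : Fin n → ℝ => ((x p * x ⟨n - 1, Nat.sub_one_lt (by omega)⟩ : ℝ) : ℂ) * φ x)
      = fun x => ((x p : ℝ) : ℂ) * (((x (⟨n - 1, Nat.sub_one_lt (by omega)⟩ : Fin n) : ℝ) : ℂ) * φ x) := by
    funext x
    push_cast
    ring
  have hc1 : lam - 1 - ((n : ℂ) - 1) / 2 = (lam - ((n : ℂ) - 1) / 2) - 1 := by ring
  have hc2 : lam + 1 - ((n : ℂ) - 1) / 2 = (lam - ((n : ℂ) - 1) / 2) + 1 := by ring
  have hL1 : 1 ≤ l.toNat := by omega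
  unfold Kact
  rw [if_pos (by omega : (0:ℤ) ≤ l + 2), if_pos (by omega : (0:ℤ) ≤ l - 1)]
  rw [show (l + 2).toNat = l.toNat + 2 by omega]
  rw [show (l - 1).toNat = l.toNat - 1 by omega]
  rw [hpdl]
  rw [hW]
  rw [St12.sum_assembly _
    (fun k => gegenCoeff (lam + 1 - ((n : ℂ) - 1) / 2) (l.toNat - 1) k *
      ((-1 : ℂ) ^ k * ((-1 : ℂ) ^ (l.toNat - 1 - 2 * k) *
        (pd (⟨n - 1, Nat.sub_one_lt (by omega)⟩ : Fin n))^[l.toNat - 1 - 2 * k]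
          ((lapP (n := n))^[k] (pd p ⇑φ)) 0)))
    (-(4 * gam (lam - ((n : ℂ) - 1) / 2) l.toNat))
    ((l.toNat + 2) / 2) ((l.toNat - 1) / 2 + 1) (by omega) ?_ ?_ ?_]
  rotate_left
  · simp only [Nat.mul_zero, Nat.sub_zero, pow_zero, one_mul, Function.iterate_zero, id_eq]
    rw [St12.T_k0 hp hq hφ]
    simp
  · intro j hj
    have hjk : 2 * j + 1 ≤ l.toNat := by omega
    rw [show l.toNat + 2 - 2 * (j + 1) = l.toNat - 1 - 2 * j + 1 by omega]
    rw [St12.T_pos hp hq hφ j (l.toNat - 1 - 2 * j), hc1, hc2]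
    exact St12.term_id _ _ l.toNat j hjk
  · intro j hj1 hj2
    rw [show l.toNat + 2 - 2 * (j + 1) = 0 by omega]
    simp only [Function.iterate_zero, id_eq, pow_zero, one_mul]
    rw [St12.T_m0 hp hq hφ (j + 1)]
    simp
  · ring

end St12

/-- `(x_p x_n)·𝒦_{λ−1,ν+1} = 4 γ(λ − (n−1)/2, ν−λ)·∂_p 𝒦_{λ+1,ν}` as tempered distributions
on ℝ^n, tested against an arbitrary Schwartz function `φ`; `(x_p x_n·T)(φ) = T(x_p x_n φ)`
and `(∂_p T)(φ) = −T(∂_p φ)`. -/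
theorem stmt12 (n : ℕ) (hn : 2 ≤ n) (lam nu : ℂ) (l : ℤ) (hl : 0 ≤ l)
    (hln : nu - lam = (l : ℂ)) (p : Fin n) (hp : (p : ℕ) < n - 1)
    (φ : SchwartzMap (Fin n → ℝ) ℂ) :
    Kact n (lam - 1) (l + 2) (fun x => ((x p * x ⟨n - 1, by omega⟩ : ℝ) : ℂ) * φ x)
      = 4 * gam (lam - ((n : ℂ) - 1) / 2) l.toNat *
          (-(Kact n (lam + 1) (l - 1) (pd p ⇑φ))) := by

  by_cases h1 : l = 0
  · subst h1; exact St12.case_zero n hn lam p hp φ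
  · exact St12.case_pos n hn lam l hl h1 p hp φ
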